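/- Let G be a finite group, p a prime, and suppose there is x ∈ P (P a Sylow p-subgroup) with x ∉ [P,P] such that C_P(x) = C_G(x) ∩ P is a Sylow p-subgroup of C_G(x) and [C_G(x) : C_P(x)] is coprime to p. Then the induced map C_P(x)^{ab} ⊗ 𝔽_p → C_G(x)^{ab} ⊗ 𝔽_p is nonzero. (Transfer argument: if it were zero, composing with the transfer map would make the p-part of the composite C_P(x)^{ab}_p → C_G(x)^{ab}_p → C_P(x)^{ab}_p nilpotent, contradicting that the transfer sends x to x^{[C_G(x):C_P(x)]} with exponent coprime to p.) -/

import Mathlib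

/-- A p-element is an element of p-power order. -/
def IsPElement (p : ℕ) {G : Type*} [Group G] (x : G) : Prop :=
  ∃ n : ℕ, orderOf x = p ^ n

/-- The map H₁(A, 𝔽_p) → H₁(B, 𝔽_p), modeled as the map on abelianizations
modulo p-th powers induced by a group homomorphism f : A →* B. -/
def h1ModP (p : ℕ) {A B : Type*} [Group A] [Group B] (f : A →* B) :
    Abelianization A ⧸ (powMonoidHom p : Abelianization A →* Abelianization A).range →*
      Abelianization B ⧸ (powMonoidHom p : Abelianization B →* Abelianization B).range :=
  QuotientGroup.map _ _ (Abelianization.map f) (by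
    rintro a ⟨y, rfl⟩
    exact ⟨Abelianization.map f y, by simp [powMonoidHom]⟩)

section Aux

variable {G : Type*} [Group G]

/-- Auxiliary: if an element of a group has order divisible by a prime `p`,
then the `p`-th power map on that (finite) group is not surjective. -/
lemma aux_exists_not_pow_mem_range (p : ℕ) (hp : p.Prime) {A : Type*} [CommGroup A]
    [Finite A] (a : A) (ha : p ∣ orderOf a) :
    ∃ b : A, b ∉ (powMonoidHom p : A →* A).range := by
  by_contra h
  push_neg at h
  have hsurj : Function.Surjective (powMonoidHom p : A →* A) := by
    intro b
    obtain ⟨c, hc⟩ := h b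
    exact ⟨c, hc⟩
  have hinj : Function.Injective (powMonoidHom p : A →* A) :=
    (Finite.injective_iff_surjective).mpr hsurj
  -- the element a ^ (orderOf a / p) has order p, contradicting injectivity
  have hpos : 0 < orderOf a := by
    rcases Nat.eq_zero_or_pos (orderOf a) with h0 | h0
    · exfalso
      have : Finite A := inferInstance
      have := orderOf_pos a
      omega
    · exact h0
  set b := a ^ (orderOf a / p) with hb
  have hbp : b ^ p = 1 := by
    rw [hb, ← pow_mul, Nat.div_mul_cancel ha, pow_orderOf_eq_one]
  have hbne : b ≠ 1 := by
    intro hb1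
    have := orderOf_dvd_of_pow_eq_one (n := orderOf a / p) (x := a) (by rw [← hb, hb1])
    have hlt : orderOf a / p < orderOf a := by
      apply Nat.div_lt_self hpos hp.one_lt
    have hdivpos : 0 < orderOf a / p := by
      apply Nat.div_pos (Nat.le_of_dvd hpos ha) hp.pos
    exact absurd (Nat.le_of_dvd hdivpos this) (by omega)
  apply hbne
  have : (powMonoidHom p : A →* A) b = (powMonoidHom p : A →* A) 1 := by
    simp [powMonoidHom, hbp]
  exact hinj this

end Aux

/-- Transfer argument: if x ∈ P, x ∉ [P,P], and C_P(x) = P ⊓ C_G(x) is a Sylow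
p-subgroup of C_G(x) of index coprime to p, then the induced map
H₁(C_P(x), 𝔽_p) → H₁(C_G(x), 𝔽_p) is nonzero. -/
theorem h1_map_ne_trivial_of_transfer (p : ℕ) (hp : p.Prime) (G : Type*) [Group G]
    [Finite G] (P : Sylow p G) (x : G) (hxP : x ∈ (P : Subgroup G))
    (hx' : x ∉ ⁅(P : Subgroup G), (P : Subgroup G)⁆)
    (hpgrp : IsPGroup p ↥((P : Subgroup G) ⊓ Subgroup.centralizer {x}))
    (hsyl : Nat.Coprime
      (((P : Subgroup G) ⊓ Subgroup.centralizer {x}).relIndex (Subgroup.centralizer {x})) p) :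
    h1ModP p (Subgroup.inclusion
        (inf_le_right : (P : Subgroup G) ⊓ Subgroup.centralizer {x} ≤
          Subgroup.centralizer {x})) ≠ 1 := by
  classical
  intro hf
  set C : Subgroup G := Subgroup.centralizer {x} with hC
  set S : Subgroup G := (P : Subgroup G) ⊓ C with hS
  have hxC : x ∈ C := Subgroup.mem_centralizer_iff.mpr (by rintro y rfl; rfl)
  have hxS : x ∈ S := ⟨hxP, hxC⟩
  set H : Subgroup ↥C := S.subgroupOf C with hH
  -- the natural map from H to P
  set j : H →* ↥(P : Subgroup G) :=
    { toFun := fun y => ⟨((y : ↥C) : G), (Subgroup.mem_subgroupOf.mp y.2).1⟩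
      map_one' := rfl
      map_mul' := fun _ _ => rfl } with hj
  set φ : H →* Abelianization ↥(P : Subgroup G) := Abelianization.of.comp j with hφ
  set xC : ↥C := ⟨x, hxC⟩ with hxCdef
  set xP : ↥(P : Subgroup G) := ⟨x, hxP⟩ with hxPdef
  have key : ∀ (k : ℕ) (g₀ : ↥C), g₀⁻¹ * xC ^ k * g₀ ∈ H → g₀⁻¹ * xC ^ k * g₀ = xC ^ k := by
    intro k g₀ _
    have hcomm : x * (g₀ : G) = (g₀ : G) * x := Subgroup.mem_centralizer_iff.mp g₀.2 x rfl
    have hcomm' : Commute x ((g₀ : G)) := hcomm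
    have hcommk : Commute ((g₀ : G)) (x ^ k) := hcomm'.symm.pow_right k
    ext
    push_cast
    rw [mul_assoc, ← hcommk.eq, ← mul_assoc, inv_mul_cancel, one_mul]
  set T : ↥C →* Abelianization ↥(P : Subgroup G) := MonoidHom.transfer φ with hT
  have ht : T xC = φ ⟨xC ^ H.index, MonoidHom.transfer_eq_pow_aux xC key⟩ :=
    MonoidHom.transfer_eq_pow φ xC key
  have hxpow : j ⟨xC ^ H.index, MonoidHom.transfer_eq_pow_aux xC key⟩ = xP ^ H.index := by
    ext
    push_cast [hj]
    rfl
  have ht2 : T xC = (Abelianization.of xP) ^ H.index := by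
    rw [ht, hφ, MonoidHom.comp_apply, hxpow, map_pow]
  -- the image of x in the abelianization of P is nontrivial of p-power order
  have hxab : Abelianization.of xP ≠ 1 := by
    intro h1
    apply hx'
    have hker : xP ∈ commutator ↥(P : Subgroup G) := by
      rwa [← QuotientGroup.eq_one_iff xP]
    have := Subgroup.mem_map_of_mem (P : Subgroup G).subtype hker
    rw [commutator_def, Subgroup.map_commutator, ← MonoidHom.range_eq_map,
      Subgroup.range_subtype] at this
    exact this
  obtain ⟨m, hm⟩ := P.2 xP
  have hordab : orderOf (Abelianization.of xP) ∣ p ^ m := by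
    apply orderOf_dvd_of_pow_eq_one
    rw [← map_pow, hm, map_one]
  have hpord : p ∣ orderOf (Abelianization.of xP) := by
    obtain ⟨j', hj', hee⟩ := (Nat.dvd_prime_pow hp).mp hordab
    rcases Nat.eq_zero_or_pos j' with rfl | hj0
    · exact absurd (orderOf_eq_one_iff.mp (by simpa using hee)) hxab
    · rw [hee]; exact dvd_pow_self p hj0.ne'
  have hidx : H.index = S.relIndex C := rfl
  have hcop : Nat.Coprime H.index p := by rwa [hidx]
  -- T xC ≠ 1
  have hTx : T xC ≠ 1 := by
    rw [ht2]
    intro h1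
    have := orderOf_dvd_of_pow_eq_one h1
    have hpdvd : p ∣ H.index := dvd_trans hpord this
    exact hp.one_lt.ne' (Nat.Coprime.eq_one_of_dvd hcop.symm hpdvd)
  -- factor T through the abelianization of C
  set T' : Abelianization ↥C →* Abelianization ↥(P : Subgroup G) :=
    Abelianization.lift T with hT'
  have hT'x : T' (Abelianization.of xC) = T xC := rfl
  -- p divides the order of the class of x in the abelianization of C
  set aC : Abelianization ↥C := Abelianization.of xC with haC
  have hordTx : p ∣ orderOf (T' aC) := by
    rw [hT'x, ht2]
    have hdvd : orderOf ((Abelianization.of xP) ^ H.index) ∣ p ^ m := by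
      apply orderOf_dvd_of_pow_eq_one
      rw [← pow_mul, mul_comm, pow_mul, ← map_pow, hm, map_one, one_pow]
    obtain ⟨j', hj', hee⟩ := (Nat.dvd_prime_pow hp).mp hdvd
    rcases Nat.eq_zero_or_pos j' with rfl | hj0
    · exfalso
      apply hTx
      rw [ht2]
      exact orderOf_eq_one_iff.mp (by simpa using hee)
    · rw [hee]; exact dvd_pow_self p hj0.ne'
  have hpaC : p ∣ orderOf aC := dvd_trans hordTx (orderOf_map_dvd T' aC)
  -- hence there is an element of Abelianization C not a p-th power
  have : Finite ↥C := inferInstance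
  have : Finite (Abelianization ↥C) := Quotient.finite _
  obtain ⟨b, hb⟩ := aux_exists_not_pow_mem_range p hp aC hpaC
  -- the quotient Q
  set N : Subgroup (Abelianization ↥C) :=
    (powMonoidHom p : Abelianization ↥C →* Abelianization ↥C).range with hN
  set Q := Abelianization ↥C ⧸ N with hQdef
  set π : Abelianization ↥C →* Q := QuotientGroup.mk' N with hπ
  have hπb : π b ≠ 1 := by
    rw [hπ, QuotientGroup.mk'_apply]
    rw [Ne, QuotientGroup.eq_one_iff]
    exact hb
  have hπsurj : Function.Surjective π := QuotientGroup.mk'_surjective N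
  set ψ : ↥C →* Q := π.comp Abelianization.of with hψ
  have hψsurj : Function.Surjective ψ := by
    intro q
    obtain ⟨b', rfl⟩ := hπsurj q
    obtain ⟨c, rfl⟩ := QuotientGroup.mk_surjective b'
    exact ⟨c, rfl⟩
  -- Q is a p-group
  have hQp : IsPGroup p Q := by
    intro q
    refine ⟨1, ?_⟩
    obtain ⟨b', rfl⟩ := hπsurj q
    rw [pow_one, ← map_pow, hπ, QuotientGroup.mk'_apply, QuotientGroup.eq_one_iff]
    exact ⟨b', rfl⟩
  have : Finite Q := Quotient.finite _
  haveI : Fact p.Prime := ⟨hp⟩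
  -- image of H under ψ is all of Q
  have himg : Subgroup.map ψ H = ⊤ := by
    rw [← Subgroup.index_eq_one]
    obtain ⟨k', hk'⟩ := IsPGroup.iff_card.mp hQp
    have h1 : (Subgroup.map ψ H).index ∣ H.index := Subgroup.index_map_dvd H hψsurj
    have h2 : (Subgroup.map ψ H).index ∣ p ^ k' := hk' ▸ Subgroup.index_dvd_card _
    have hcop2 : Nat.Coprime (Subgroup.map ψ H).index p := Nat.Coprime.coprime_dvd_left h1 hcop
    obtain ⟨j', hj', hee⟩ := (Nat.dvd_prime_pow hp).mp h2
    rcases Nat.eq_zero_or_pos j' with rfl | hj0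
    · rw [hee, pow_zero]
    · exfalso
      have hpd : p ∣ (Subgroup.map ψ H).index := hee ▸ dvd_pow_self p hj0.ne'
      exact hp.one_lt.ne' (Nat.Coprime.eq_one_of_dvd hcop2.symm hpd)
  -- so there is an element of H with nontrivial image in Q
  have hmem : π b ∈ Subgroup.map ψ H := himg ▸ Subgroup.mem_top (π b)
  obtain ⟨h, hhH, hψh⟩ := hmem
  -- transport to S and derive the contradiction
  set s : ↥S := ⟨(h : G), Subgroup.mem_subgroupOf.mp hhH⟩ with hs
  have hincl : Subgroup.inclusion (inf_le_right : S ≤ C) s = h := by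
    ext
    rfl
  have heval : h1ModP p (Subgroup.inclusion (inf_le_right : S ≤ C))
      (QuotientGroup.mk (Abelianization.of s)) = π b := by
    rw [← hψh]
    show QuotientGroup.mk (Abelianization.map
        (Subgroup.inclusion (inf_le_right : S ≤ C)) (Abelianization.of s)) = ψ h
    rw [Abelianization.map_of, hincl]
    rfl
  rw [hf] at heval
  exact hπb (by rw [← heval]; rfl)
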